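/- Let α ∈ ℂ and let φ, ψ : ℂ → ℂ be entire functions with φ nowhere vanishing, satisfying ψ''(x) = (2x − 2ψ(x)φ(x))·ψ(x), φ''(x) = (2x − 2ψ(x)φ(x))·φ(x), and φ'(x)ψ(x) − φ(x)ψ'(x) = 2α for all x ∈ ℂ. Set z := −ψφ and u₀ := φ'/φ, and for (x,t) ∈ ℂ² define the 2×2 matrices C(x,t) = [[t²/4 − z(x)/2 − x/2, −(φ(x)/2)(t − u₀(x))], [−(1/φ(x))((u₀(x) + t)z(x)/2 + α), −t²/4 + z(x)/2 + x/2]] and D(x,t) = [[−t/2, φ(x)], [z(x)/φ(x), t/2]]. Then the zero-curvature (compatibility) equation holds for all (x,t) ∈ ℂ²: ∂C/∂x − ∂D/∂t + C·D − D·C = 0. -/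

import Mathlib

/-- Matrix `C` of the isomonodromic system for Painlevé II with parameter `α`. -/
noncomputable def Cmat (α : ℂ) (φ z u : ℂ → ℂ) (x t : ℂ) : Matrix (Fin 2) (Fin 2) ℂ :=
  !![t ^ 2 / 4 - z x / 2 - x / 2, -(φ x / 2) * (t - u x);
     -(1 / φ x) * ((u x + t) * z x / 2 + α), -t ^ 2 / 4 + z x / 2 + x / 2]

/-- Matrix `D` of the isomonodromic system for Painlevé II with parameter `α`. -/
noncomputable def Dmat (φ z : ℂ → ℂ) (x t : ℂ) : Matrix (Fin 2) (Fin 2) ℂ :=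
  !![-t / 2, φ x;
     z x / φ x, t / 2]

set_option maxHeartbeats 1600000 in
/-- **Theorem 2.7 (compatibility, part (ii)).** Under the conditions
`ψ''/ψ = φ''/φ = −2ψφ + 2x` and `φ'ψ − φψ' = 2α`, with `z = −ψφ` and `u₀ = φ'/φ`,
the matrices `C`, `D` satisfy the zero-curvature equation
`∂C/∂x − ∂D/∂t + [C, D] = 0`. -/
theorem zero_curvature_CD
    (α : ℂ) (φ ψ : ℂ → ℂ) (hφ : Differentiable ℂ φ) (hψ : Differentiable ℂ ψ)
    (hφ0 : ∀ x : ℂ, φ x ≠ 0)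
    (hψ'' : ∀ x : ℂ, deriv (deriv ψ) x = (2 * x - 2 * ψ x * φ x) * ψ x)
    (hφ'' : ∀ x : ℂ, deriv (deriv φ) x = (2 * x - 2 * ψ x * φ x) * φ x)
    (hW : ∀ x : ℂ, deriv φ x * ψ x - φ x * deriv ψ x = 2 * α)
    (z u : ℂ → ℂ)
    (hz : z = fun x => -(ψ x * φ x))
    (hu : u = fun x => deriv φ x / φ x) :
    ∀ x t : ℂ,
      (Matrix.of fun i j : Fin 2 => deriv (fun y => Cmat α φ z u y t i j) x)
        - (Matrix.of fun i j : Fin 2 => deriv (fun s => Dmat φ z x s i j) t)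
        + Cmat α φ z u x t * Dmat φ z x t - Dmat φ z x t * Cmat α φ z u x t = 0 := by
  intro x t
  have hφx : HasDerivAt φ (deriv φ x) x := (hφ x).hasDerivAt
  have hψx : HasDerivAt ψ (deriv ψ x) x := (hψ x).hasDerivAt
  have hφA : AnalyticOnNhd ℂ φ Set.univ := fun y _ => hφ.analyticAt y
  have hφ'x : HasDerivAt (deriv φ) (deriv (deriv φ) x) x :=
    ((hφA.deriv x trivial).differentiableAt).hasDerivAt
  have hzx : HasDerivAt z (-(deriv ψ x * φ x + ψ x * deriv φ x)) x := by
    rw [hz]; exact (hψx.mul hφx).neg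
  have hux : HasDerivAt u
      ((deriv (deriv φ) x * φ x - deriv φ x * deriv φ x) / φ x ^ 2) x := by
    rw [hu]; exact hφ'x.div hφx (hφ0 x)
  have d00 : deriv (fun y => t ^ 2 / 4 - z y / 2 - y / 2) x
      = 0 - -(deriv ψ x * φ x + ψ x * deriv φ x) / 2 - 1 / 2 :=
    (((hasDerivAt_const x (t ^ 2 / 4)).sub (hzx.div_const 2)).sub
      ((hasDerivAt_id x).div_const 2)).deriv
  have d01 : deriv (fun y => -(φ y / 2) * (t - u y)) x
      = -(deriv φ x / 2) * (t - u x)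
        + -(φ x / 2) * (0 - (deriv (deriv φ) x * φ x - deriv φ x * deriv φ x) / φ x ^ 2) :=
    (((hφx.div_const 2).neg).mul ((hasDerivAt_const x t).sub hux)).deriv
  have d10 : deriv (fun y => -(1 / φ y) * ((u y + t) * z y / 2 + α)) x
      = -((0 * φ x - 1 * deriv φ x) / φ x ^ 2) * ((u x + t) * z x / 2 + α)
        + -(1 / φ x) * (((deriv (deriv φ) x * φ x - deriv φ x * deriv φ x) / φ x ^ 2 * z x
            + (u x + t) * -(deriv ψ x * φ x + ψ x * deriv φ x)) / 2) :=
    ((((hasDerivAt_const x (1 : ℂ)).div hφx (hφ0 x)).neg).mul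
      ((((hux.add_const t).mul hzx).div_const 2).add_const α)).deriv
  have d11 : deriv (fun y => -t ^ 2 / 4 + z y / 2 + y / 2) x
      = 0 + -(deriv ψ x * φ x + ψ x * deriv φ x) / 2 + 1 / 2 :=
    (((hasDerivAt_const x (-t ^ 2 / 4)).add (hzx.div_const 2)).add
      ((hasDerivAt_id x).div_const 2)).deriv
  have e00 : deriv (fun s : ℂ => -s / 2) t = -1 / 2 :=
    (((hasDerivAt_id t).neg).div_const 2).deriv
  have e11 : deriv (fun s : ℂ => s / 2) t = 1 / 2 :=
    ((hasDerivAt_id t).div_const 2).deriv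
  have hψ' : deriv ψ x = (deriv φ x * ψ x - 2 * α) / φ x := by
    rw [eq_div_iff (hφ0 x)]
    linear_combination -(hW x)
  ext i j
  fin_cases i <;> fin_cases j <;>
    simp only [Cmat, Dmat, Matrix.sub_apply, Matrix.add_apply, Matrix.mul_apply,
      Fin.sum_univ_two, Matrix.of_apply, Matrix.cons_val', Matrix.cons_val_zero,
      Matrix.cons_val_one, Matrix.head_cons, Matrix.empty_val', Matrix.cons_val_fin_one,
      Matrix.head_fin_const, Matrix.zero_apply, Fin.isValue, Fin.mk_zero, Fin.mk_one]
  all_goals simp only [d00, d01, d10, d11, e00, e11, deriv_const]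
  all_goals simp only [hz, hu, hφ'' x, hψ']
  all_goals field_simp [hφ0 x]
  all_goals ring_nf
  all_goals field_simp [hφ0 x]
  all_goals try ring1
  all_goals ring_nf
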